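/- Let F be a finite nonempty set and let v : Finset F → ℝ be a positive cooperative game. Suppose χ assigns to every nonempty subset S ⊆ F and every j ∈ S a positive real number χ(S, j) such that: (i) geometric efficiency holds on every subset, i.e. v(∅) · ∏_{j ∈ S} χ(S, j) = v(S) for every nonempty S ⊆ F; and (ii) χ preserves ratios, i.e. for every S ⊆ F and all distinct j₁, j₂ ∈ S, χ(S, j₁)/χ(S \ {j₂}, j₁) = χ(S, j₂)/χ(S \ {j₁}, j₂). Then χ is uniquely determined: for every nonempty S ⊆ F and j ∈ S, χ(S, j) = exp( Σ_{c ⊆ S \ {j}} (|c|!·(|S|−|c|−1)!/|S|!) · (log v(c ∪ {j}) − log v(c)) ). -/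

import Mathlib

/-- The multiplicative Shapley value of feature `j` computed within the coalition `S`
for the game `v`. -/
noncomputable def multShapley {F : Type*} [DecidableEq F]
    (v : Finset F → ℝ) (S : Finset F) (j : F) : ℝ :=
  Real.exp (∑ c ∈ (S.erase j).powerset,
    ((Nat.factorial c.card * Nat.factorial (S.card - c.card - 1) : ℝ) /
      Nat.factorial S.card) *
    (Real.log (v (insert j c)) - Real.log (v c)))

/-- The logarithm of the multiplicative Shapley value. -/
noncomputable def shapLog {F : Type*} [DecidableEq F]
    (v : Finset F → ℝ) (S : Finset F) (j : F) : ℝ :=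
  ∑ c ∈ (S.erase j).powerset,
    ((Nat.factorial c.card * Nat.factorial (S.card - c.card - 1) : ℝ) /
      Nat.factorial S.card) *
    (Real.log (v (insert j c)) - Real.log (v c))

lemma multShapley_eq_exp {F : Type*} [DecidableEq F]
    (v : Finset F → ℝ) (S : Finset F) (j : F) :
    multShapley v S j = Real.exp (shapLog v S j) := rfl

lemma coeff_eq (n k : ℕ) (hn : 1 ≤ n) (hk : k ≤ n - 1) :
    (n : ℝ) * ((Nat.factorial k * Nat.factorial (n - k - 1) : ℝ) / Nat.factorial n)
      = ((n - 1 - k : ℕ) : ℝ) *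
          ((Nat.factorial k * Nat.factorial (n - 1 - k - 1) : ℝ) /
            Nat.factorial (n - 1))
        + (if k = n - 1 then 1 else 0) := by
  obtain ⟨m, rfl⟩ : ∃ m, n = m + 1 := ⟨n - 1, by omega⟩
  simp only [Nat.add_sub_cancel] at hk ⊢
  rcases eq_or_lt_of_le hk with rfl | hlt
  · have h1 : k + 1 - k - 1 = 0 := by omega
    have h2 : k - k = 0 := by omega
    have h3 : k - k - 1 = 0 := by omega
    rw [h1, h3, h2, if_pos rfl, Nat.factorial_succ k]
    have hk0 : (0 : ℝ) < (Nat.factorial k : ℝ) := by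
      exact_mod_cast Nat.factorial_pos k
    push_cast
    field_simp
    simp
  · obtain ⟨e, rfl⟩ : ∃ e, m = k + e + 1 := ⟨m - k - 1, by omega⟩
    have h1 : k + e + 1 + 1 - k - 1 = e + 1 := by omega
    have h2 : k + e + 1 - k = e + 1 := by omega
    have h3 : k + e + 1 - k - 1 = e := by omega
    rw [h1, h3, h2, if_neg (by omega)]
    have hfs1 : Nat.factorial (k + e + 1 + 1) = (k + e + 2) * Nat.factorial (k + e + 1) := by
      rw [show k + e + 1 + 1 = (k + e + 1) + 1 from rfl, Nat.factorial_succ]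
    have hfs2 : Nat.factorial (e + 1) = (e + 1) * Nat.factorial e := Nat.factorial_succ e
    rw [hfs1, hfs2]
    have hk0 : (0 : ℝ) < (Nat.factorial k : ℝ) := by exact_mod_cast Nat.factorial_pos k
    have he0 : (0 : ℝ) < (Nat.factorial e : ℝ) := by exact_mod_cast Nat.factorial_pos e
    have hke0 : (0 : ℝ) < (Nat.factorial (k + e + 1) : ℝ) := by
      exact_mod_cast Nat.factorial_pos (k + e + 1)
    push_cast
    field_simp
    ring

lemma shapLog_rec {F : Type*} [DecidableEq F] (v : Finset F → ℝ) (S : Finset F) (j : F)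
    (hj : j ∈ S) :
    (S.card : ℝ) * shapLog v S j =
      (Real.log (v S) - Real.log (v (S.erase j)))
        + ∑ j₂ ∈ S.erase j, shapLog v (S.erase j₂) j := by
  classical
  set T := S.erase j with hT
  have hn : 1 ≤ S.card := Finset.card_pos.mpr ⟨j, hj⟩
  have hTcard : T.card = S.card - 1 := Finset.card_erase_of_mem hj
  have hins : insert j T = S := Finset.insert_erase hj
  set Δ : Finset F → ℝ := fun c => Real.log (v (insert j c)) - Real.log (v c) with hΔ
  -- rewrite each inner shapLog as a sum over T.powerset with an indicator
  have hinner : ∀ j₂ ∈ T, shapLog v (S.erase j₂) j =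
      ∑ c ∈ T.powerset, (if j₂ ∉ c then
        ((Nat.factorial c.card * Nat.factorial (S.card - 1 - c.card - 1) : ℝ) /
          Nat.factorial (S.card - 1)) * Δ c else 0) := by
    intro j₂ hj₂
    have hj₂S : j₂ ∈ S := (Finset.mem_erase.mp hj₂).2
    have hj₂j : j₂ ≠ j := (Finset.mem_erase.mp hj₂).1
    have hcard' : (S.erase j₂).card = S.card - 1 := Finset.card_erase_of_mem hj₂S
    have herase : (S.erase j₂).erase j = T.erase j₂ := by
      ext x
      simp only [hT, Finset.mem_erase]
      tauto
    have hpow : (T.erase j₂).powerset = T.powerset.filter (fun c => j₂ ∉ c) := by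
      ext c
      simp [Finset.mem_powerset, Finset.subset_erase, and_comm]
    rw [shapLog, herase, hcard', hpow, Finset.sum_filter]
  rw [Finset.sum_congr rfl hinner, Finset.sum_comm]
  have hswap : ∀ c ∈ T.powerset,
      (∑ j₂ ∈ T, (if j₂ ∉ c then
        ((Nat.factorial c.card * Nat.factorial (S.card - 1 - c.card - 1) : ℝ) /
          Nat.factorial (S.card - 1)) * Δ c else 0)) =
      ((T.card - c.card : ℕ) : ℝ) *
        (((Nat.factorial c.card * Nat.factorial (S.card - 1 - c.card - 1) : ℝ) /
          Nat.factorial (S.card - 1)) * Δ c) := by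
    intro c hc
    have hcT : c ⊆ T := Finset.mem_powerset.mp hc
    rw [Finset.sum_ite, Finset.sum_const_zero, add_zero, Finset.sum_const]
    have : T.filter (fun j₂ => j₂ ∉ c) = T \ c := by
      rw [Finset.sdiff_eq_filter]
    rw [this, Finset.card_sdiff_of_subset hcT, nsmul_eq_mul]
  rw [Finset.sum_congr rfl hswap]
  have hmain : ∀ c ∈ T.powerset,
      (S.card : ℝ) * (((Nat.factorial c.card * Nat.factorial (S.card - c.card - 1) : ℝ) /
          Nat.factorial S.card) * Δ c)
      = ((T.card - c.card : ℕ) : ℝ) *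
        (((Nat.factorial c.card * Nat.factorial (S.card - 1 - c.card - 1) : ℝ) /
          Nat.factorial (S.card - 1)) * Δ c)
        + (if c = T then Δ c else 0) := by
    intro c hc
    have hcT : c ⊆ T := Finset.mem_powerset.mp hc
    have hk : c.card ≤ S.card - 1 := hTcard ▸ Finset.card_le_card hcT
    have hco := coeff_eq S.card c.card hn hk
    have hiff : (c = T) ↔ (c.card = S.card - 1) := by
      constructor
      · rintro rfl; exact hTcard
      · intro h
        exact Finset.eq_of_subset_of_card_le hcT (by omega)
    have h1 : ((T.card - c.card : ℕ) : ℝ) = ((S.card - 1 - c.card : ℕ) : ℝ) := by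
      rw [hTcard]
    by_cases hceq : c = T
    · rw [if_pos hceq]
      have hk' : c.card = S.card - 1 := by rw [hceq]; exact hTcard
      rw [if_pos hk'] at hco
      rw [h1]
      linear_combination (Δ c) * hco
    · rw [if_neg hceq]
      have hk' : c.card ≠ S.card - 1 := fun h => hceq (hiff.mpr h)
      rw [if_neg hk'] at hco
      rw [h1]
      linear_combination (Δ c) * hco
  have expand : (S.card : ℝ) * shapLog v S j =
      ∑ c ∈ T.powerset, (S.card : ℝ) *
        (((Nat.factorial c.card * Nat.factorial (S.card - c.card - 1) : ℝ) /
          Nat.factorial S.card) * Δ c) := by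
    rw [shapLog, ← hT, Finset.mul_sum]
  rw [expand, Finset.sum_congr rfl hmain, Finset.sum_add_distrib]
  have hTmem : T ∈ T.powerset := Finset.mem_powerset_self T
  rw [Finset.sum_ite_eq' T.powerset T Δ, if_pos hTmem]
  have : Δ T = Real.log (v S) - Real.log (v T) := by
    rw [hΔ]; simp only; rw [hins]
  rw [this]; ring

/-- **Uniqueness part of Theorem 1**: any assignment `χ` of positive contributions that
is geometrically efficient on every nonempty subset and preserves ratios must equal the
multiplicative Shapley values. -/
theorem xshap_uniqueness
    {F : Type*} [Fintype F] [DecidableEq F] [Nonempty F]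
    (v : Finset F → ℝ) (hv : ∀ S : Finset F, 0 < v S)
    (χ : Finset F → F → ℝ)
    (hpos : ∀ S : Finset F, S.Nonempty → ∀ j ∈ S, 0 < χ S j)
    (heff : ∀ S : Finset F, S.Nonempty → v ∅ * ∏ j ∈ S, χ S j = v S)
    (hratio : ∀ S : Finset F, ∀ j₁ ∈ S, ∀ j₂ ∈ S, j₁ ≠ j₂ →
      χ S j₁ / χ (S.erase j₂) j₁ = χ S j₂ / χ (S.erase j₁) j₂) :
    ∀ S : Finset F, S.Nonempty → ∀ j ∈ S, χ S j = multShapley v S j := by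
  -- log-efficiency
  have hA : ∀ (S' : Finset F), S'.Nonempty →
      ∑ i ∈ S', Real.log (χ S' i) = Real.log (v S') - Real.log (v ∅) := by
    intro S' h
    have he := heff S' h
    have hlp : Real.log (∏ i ∈ S', χ S' i) = ∑ i ∈ S', Real.log (χ S' i) :=
      Real.log_prod (fun i hi => (hpos S' h i hi).ne')
    have := congrArg Real.log he
    rw [Real.log_mul (hv ∅).ne' (by
        exact (Finset.prod_pos (fun i hi => hpos S' h i hi)).ne'), hlp] at this
    linarith
  have key : ∀ n : ℕ, ∀ S : Finset F, S.card ≤ n → S.Nonempty → ∀ j ∈ S,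
      χ S j = multShapley v S j := by
    intro n
    induction n with
    | zero =>
      intro S hc hne j hj
      exact absurd (Finset.card_pos.mpr hne) (by omega)
    | succ n ih =>
      intro S hcard hne j hj
      have hn1 : 1 ≤ S.card := Finset.card_pos.mpr hne
      have hTcard : (S.erase j).card = S.card - 1 := Finset.card_erase_of_mem hj
      have hsum1 : ∑ j₂ ∈ S.erase j, Real.log (χ S j₂) =
          (Real.log (v S) - Real.log (v ∅)) - Real.log (χ S j) := by
        have h := hA S hne
        rw [← Finset.add_sum_erase S _ hj] at h
        linarith
      have hsum2 : ∑ j₂ ∈ S.erase j, Real.log (χ (S.erase j) j₂) =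
          Real.log (v (S.erase j)) - Real.log (v ∅) := by
        rcases (S.erase j).eq_empty_or_nonempty with h | h
        · rw [h]; simp [h]
        · exact hA _ h
      have hrec : ∀ j₂ ∈ S.erase j,
          Real.log (χ S j) - shapLog v (S.erase j₂) j
            = Real.log (χ S j₂) - Real.log (χ (S.erase j) j₂) := by
        intro j₂ hj₂
        have hj₂S : j₂ ∈ S := (Finset.mem_erase.mp hj₂).2
        have hj₂j : j₂ ≠ j := (Finset.mem_erase.mp hj₂).1
        have hjmem : j ∈ S.erase j₂ := Finset.mem_erase.mpr ⟨fun h => hj₂j h.symm, hj⟩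
        have hne' : (S.erase j₂).Nonempty := ⟨j, hjmem⟩
        have hr := hratio S j hj j₂ hj₂S (fun h => hj₂j h.symm)
        have hcard' : (S.erase j₂).card ≤ n := by
          rw [Finset.card_erase_of_mem hj₂S]; omega
        have hih : χ (S.erase j₂) j = multShapley v (S.erase j₂) j :=
          ih (S.erase j₂) hcard' hne' j hjmem
        have hlog1 : Real.log (χ (S.erase j₂) j) = shapLog v (S.erase j₂) j := by
          rw [hih, multShapley_eq_exp, Real.log_exp]
        have hTne : (S.erase j).Nonempty := ⟨j₂, hj₂⟩
        have p1 : 0 < χ S j := hpos S hne j hj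
        have p2 : 0 < χ (S.erase j₂) j := hpos _ hne' j hjmem
        have p3 : 0 < χ S j₂ := hpos S hne j₂ hj₂S
        have p4 : 0 < χ (S.erase j) j₂ := hpos _ hTne j₂ hj₂
        have := congrArg Real.log hr
        rw [Real.log_div p1.ne' p2.ne', Real.log_div p3.ne' p4.ne'] at this
        rw [← hlog1]
        exact this
      have hsumrec := Finset.sum_congr rfl hrec
      rw [Finset.sum_sub_distrib, Finset.sum_sub_distrib, Finset.sum_const,
        nsmul_eq_mul, hsum1, hsum2] at hsumrec
      have hrecS := shapLog_rec v S j hj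
      have hTc : ((S.erase j).card : ℝ) = (S.card : ℝ) - 1 := by
        rw [hTcard]; push_cast [hn1]; ring
      have hScard0 : (S.card : ℝ) ≠ 0 := by positivity
      have hlogeq : Real.log (χ S j) = shapLog v S j := by
        have h1 : (S.card : ℝ) * Real.log (χ S j) = (S.card : ℝ) * shapLog v S j := by
          rw [hTc] at hsumrec
          rw [hrecS]
          linear_combination hsumrec
        exact mul_left_cancel₀ hScard0 h1
      have := hpos S hne j hj
      rw [multShapley_eq_exp, ← hlogeq, Real.exp_log this]
  intro S hS j hj
  exact key S.card S le_rfl hS j hj
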